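/- Let c* > 0. Let u : ℝ^N × [0,∞) → ℝ be continuous, nonnegative, and bounded (sup_{x,t} u(x,t) < ∞), and define v(x,t) = ∫₀^∞ e^{−s} ∫_{ℝ^N} G(x−y, s) u(y,t) dy ds. If for every c > c* one has lim_{t→∞} sup_{|x| ≥ ct} u(x,t) = 0, then for every c > c* one also has lim_{t→∞} sup_{|x| ≥ ct} v(x,t) = 0. -/

import Mathlib

open MeasureTheory Real Set Filter
open scoped ENNReal

noncomputable section

/-- Euclidean space `ℝ^N`. -/
abbrev Spc (N : ℕ) := EuclideanSpace ℝ (Fin N)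

/-- Partial derivative of `f` in the `i`-th coordinate direction. -/
noncomputable def pdir {N : ℕ} (f : Spc N → ℝ) (i : Fin N) (x : Spc N) : ℝ :=
  fderiv ℝ f x (EuclideanSpace.single i 1)

/-- Laplacian `Δf = ∑ i ∂²f/∂xᵢ²`. -/
noncomputable def lapl {N : ℕ} (f : Spc N → ℝ) (x : Spc N) : ℝ :=
  ∑ i, pdir (pdir f i) i x

/-- The chemotaxis term `∇·(u ∇v) = ∑ i ∂ᵢ (u ∂ᵢ v)`. -/
noncomputable def divg {N : ℕ} (u v : Spc N → ℝ) (x : Spc N) : ℝ :=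
  ∑ i, pdir (fun y => u y * pdir v i y) i x

/-- Membership in `C_unif^b(ℝ^N)`: bounded and uniformly continuous. -/
def CunifB {N : ℕ} (f : Spc N → ℝ) : Prop :=
  UniformContinuous f ∧ ∃ M, ∀ x, |f x| ≤ M

/-- `t ∈ [0, T)` for an extended-real final time `T`. -/
def InT (t : ℝ) (T : ℝ≥0∞) : Prop := 0 ≤ t ∧ ENNReal.ofReal t < T

/-- Classical solution of (KS) on `ℝ^N × [0,T)`:  `u, v` continuous on `ℝ^N × [0,T)`,
twice continuously differentiable in `x` and once differentiable in `t` on `ℝ^N × (0,T)`,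
satisfying `u_t = Δu - χ ∇·(u∇v) + u(a - bu)` and `0 = Δv + u - v` pointwise there,
with `v(·,t)` bounded for each `t`. -/
structure IsClassicalKS (N : ℕ) (χ a b : ℝ) (T : ℝ≥0∞)
    (u v : Spc N → ℝ → ℝ) : Prop where
  contu : ContinuousOn (fun q : Spc N × ℝ => u q.1 q.2) {q | InT q.2 T}
  contv : ContinuousOn (fun q : Spc N × ℝ => v q.1 q.2) {q | InT q.2 T}
  cdu : ∀ t : ℝ, 0 < t → ENNReal.ofReal t < T → ContDiff ℝ 2 fun x => u x t
  cdv : ∀ t : ℝ, 0 < t → ENNReal.ofReal t < T → ContDiff ℝ 2 fun x => v x t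
  difft : ∀ x, ∀ t : ℝ, 0 < t → ENNReal.ofReal t < T → DifferentiableAt ℝ (u x) t
  equ : ∀ x, ∀ t : ℝ, 0 < t → ENNReal.ofReal t < T →
    deriv (u x) t =
      lapl (fun y => u y t) x - χ * divg (fun y => u y t) (fun y => v y t) x
        + u x t * (a - b * u x t)
  eqv : ∀ x, ∀ t : ℝ, 0 < t → ENNReal.ofReal t < T →
    0 = lapl (fun y => v y t) x + u x t - v x t
  vbdd : ∀ t : ℝ, InT t T → ∃ M, ∀ x, |v x t| ≤ M

/-- Classical solution of (KS) on `ℝ^N × (0,T)` (no regularity required at `t = 0`). -/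
structure IsClassicalKSOpen (N : ℕ) (χ a b : ℝ) (T : ℝ≥0∞)
    (u v : Spc N → ℝ → ℝ) : Prop where
  cdu : ∀ t : ℝ, 0 < t → ENNReal.ofReal t < T → ContDiff ℝ 2 fun x => u x t
  cdv : ∀ t : ℝ, 0 < t → ENNReal.ofReal t < T → ContDiff ℝ 2 fun x => v x t
  difft : ∀ x, ∀ t : ℝ, 0 < t → ENNReal.ofReal t < T → DifferentiableAt ℝ (u x) t
  equ : ∀ x, ∀ t : ℝ, 0 < t → ENNReal.ofReal t < T →
    deriv (u x) t =
      lapl (fun y => u y t) x - χ * divg (fun y => u y t) (fun y => v y t) x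
        + u x t * (a - b * u x t)
  eqv : ∀ x, ∀ t : ℝ, 0 < t → ENNReal.ofReal t < T →
    0 = lapl (fun y => v y t) x + u x t - v x t
  vbdd : ∀ t : ℝ, 0 < t → ENNReal.ofReal t < T → ∃ M, ∀ x, |v x t| ≤ M

/-- Nonnegativity of a solution pair on `ℝ^N × [0,T)`. -/
def NonnegOn {N : ℕ} (u v : Spc N → ℝ → ℝ) (T : ℝ≥0∞) : Prop :=
  ∀ x, ∀ t : ℝ, InT t T → 0 ≤ u x t ∧ 0 ≤ v x t

/-- Nonnegativity of a solution pair on `ℝ^N × (0,T)`. -/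
def NonnegOnOpen {N : ℕ} (u v : Spc N → ℝ → ℝ) (T : ℝ≥0∞) : Prop :=
  ∀ x, ∀ t : ℝ, 0 < t → ENNReal.ofReal t < T → 0 ≤ u x t ∧ 0 ≤ v x t

/-- Continuity of `t ↦ u(·,t)` from `[0,T)` into `C_unif^b(ℝ^N)` with the sup-norm. -/
def SupContOn {N : ℕ} (u : Spc N → ℝ → ℝ) (T : ℝ≥0∞) : Prop :=
  (∀ t : ℝ, InT t T → CunifB fun x => u x t) ∧
  ∀ t₀ : ℝ, InT t₀ T → ∀ ε : ℝ, 0 < ε → ∃ δ > 0, ∀ t : ℝ, InT t T → |t - t₀| < δ →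
    ∀ x, |u x t - u x t₀| ≤ ε

/-- `t ↦ u(·,t)` takes values in `L^p`, is continuous from `[0,T)` into `L^p`,
and has value `u₀` at `t = 0` in the `L^p` sense. -/
def LpContOn {N : ℕ} (u : Spc N → ℝ → ℝ) (u₀ : Spc N → ℝ) (p T : ℝ≥0∞) : Prop :=
  (∀ t : ℝ, 0 < t → ENNReal.ofReal t < T → MemLp (fun x => u x t) p volume) ∧
  Tendsto (fun t => eLpNorm (fun x => u x t - u₀ x) p volume)
    (nhdsWithin 0 (Set.Ioi 0)) (nhds 0) ∧
  ∀ t₀ : ℝ, 0 < t₀ → ENNReal.ofReal t₀ < T →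
    Tendsto (fun t => eLpNorm (fun x => u x t - u x t₀) p volume)
      (nhdsWithin t₀ {t | 0 < t ∧ ENNReal.ofReal t < T}) (nhds 0)

/-- The heat kernel `G(x,t) = (4πt)^{-N/2} exp(-|x|²/(4t))`. -/
noncomputable def heatK (N : ℕ) (x : Spc N) (t : ℝ) : ℝ :=
  (4 * π * t) ^ (-(N : ℝ) / 2) * Real.exp (-‖x‖ ^ 2 / (4 * t))

/-- The resolvent `(I - Δ)⁻¹ u`, as the Laplace transform of the heat semigroup. -/
noncomputable def resolv {N : ℕ} (u : Spc N → ℝ) (x : Spc N) : ℝ :=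
  ∫ s in Set.Ioi (0 : ℝ), Real.exp (-s) * ∫ z, heatK N (x - z) s * u z

section RIS
variable {N : ℕ}

lemma integrable_gauss {b : ℝ} (hb : 0 < b) :
    Integrable (fun v : Spc N => rexp (-b * ‖v‖ ^ 2)) := by
  have hb' : 0 < ((b : ℂ)).re := by simpa using hb
  have h := (GaussianFourier.integrable_cexp_neg_mul_sq_norm_add (V := Spc N) hb' 0 0).norm
  refine h.congr (Filter.Eventually.of_forall fun v => ?_)
  simp [Complex.norm_exp, ← Complex.ofReal_pow]

lemma integral_gauss {b : ℝ} (hb : 0 < b) :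
    ∫ v : Spc N, rexp (-b * ‖v‖ ^ 2) = (π / b) ^ ((N : ℝ) / 2) := by
  rw [GaussianFourier.integral_rexp_neg_mul_sq_norm hb]
  simp [finrank_euclideanSpace_fin]

lemma heatK_eq {s : ℝ} (w : Spc N) :
    heatK N w s = (4 * π * s) ^ (-(N : ℝ) / 2) * rexp (-(1 / (4 * s)) * ‖w‖ ^ 2) := by
  have h : -‖w‖ ^ 2 / (4 * s) = -(1 / (4 * s)) * ‖w‖ ^ 2 := by ring
  rw [heatK, h]

lemma heatK_nonneg {s : ℝ} (hs : 0 < s) (w : Spc N) : 0 ≤ heatK N w s := by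
  rw [heatK]
  exact mul_nonneg (Real.rpow_nonneg (by positivity) _) (Real.exp_nonneg _)

lemma heatK_integrable {s : ℝ} (hs : 0 < s) (x : Spc N) :
    Integrable (fun z : Spc N => heatK N (x - z) s) := by
  have hb : (0:ℝ) < 1 / (4 * s) := by positivity
  have h := ((integrable_gauss (N := N) hb).comp_sub_left x).const_mul
    ((4 * π * s) ^ (-(N : ℝ) / 2))
  refine h.congr (Filter.Eventually.of_forall fun z => ?_)
  simp only []
  rw [heatK_eq]

lemma heatK_integral {s : ℝ} (hs : 0 < s) (x : Spc N) :
    ∫ z : Spc N, heatK N (x - z) s = 1 := by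
  have hb : (0:ℝ) < 1 / (4 * s) := by positivity
  have htr := integral_sub_left_eq_self
    (fun z : Spc N => rexp (-(1 / (4 * s)) * ‖z‖ ^ 2)) volume x
  calc ∫ z : Spc N, heatK N (x - z) s
      = ∫ z : Spc N, (4 * π * s) ^ (-(N : ℝ) / 2) * rexp (-(1 / (4 * s)) * ‖x - z‖ ^ 2) := by
        congr 1; funext z; rw [heatK_eq]
    _ = (4 * π * s) ^ (-(N : ℝ) / 2) * ∫ z : Spc N, rexp (-(1 / (4 * s)) * ‖x - z‖ ^ 2) :=
        integral_const_mul _ _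
    _ = (4 * π * s) ^ (-(N : ℝ) / 2) * ∫ z : Spc N, rexp (-(1 / (4 * s)) * ‖z‖ ^ 2) := by
        rw [htr]
    _ = (4 * π * s) ^ (-(N : ℝ) / 2) * (π / (1 / (4 * s))) ^ ((N : ℝ) / 2) := by
        rw [integral_gauss hb]
    _ = 1 := by
        have h4 : π / (1 / (4 * s)) = 4 * π * s := by field_simp
        rw [h4, ← Real.rpow_add (by positivity),
          show (-(N:ℝ)/2 + (N:ℝ)/2) = 0 from by ring, Real.rpow_zero]

lemma gauss8_integrable {s : ℝ} (hs : 0 < s) (x : Spc N) :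
    Integrable (fun z : Spc N =>
      (4 * π * s) ^ (-(N : ℝ) / 2) * rexp (-‖x - z‖ ^ 2 / (8 * s))) := by
  have hb : (0:ℝ) < 1 / (8 * s) := by positivity
  have h := ((integrable_gauss (N := N) hb).comp_sub_left x).const_mul
    ((4 * π * s) ^ (-(N : ℝ) / 2))
  refine h.congr (Filter.Eventually.of_forall fun z => ?_)
  simp only []
  have : -(1 / (8 * s)) * ‖x - z‖ ^ 2 = -‖x - z‖ ^ 2 / (8 * s) := by ring
  rw [this]

lemma gauss8_integral {s : ℝ} (hs : 0 < s) (x : Spc N) :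
    ∫ z : Spc N, (4 * π * s) ^ (-(N : ℝ) / 2) * rexp (-‖x - z‖ ^ 2 / (8 * s))
      = 2 ^ ((N : ℝ) / 2) := by
  have hb : (0:ℝ) < 1 / (8 * s) := by positivity
  have htr := integral_sub_left_eq_self
    (fun z : Spc N => rexp (-(1 / (8 * s)) * ‖z‖ ^ 2)) volume x
  calc ∫ z : Spc N, (4 * π * s) ^ (-(N : ℝ) / 2) * rexp (-‖x - z‖ ^ 2 / (8 * s))
      = ∫ z : Spc N, (4 * π * s) ^ (-(N : ℝ) / 2) * rexp (-(1 / (8 * s)) * ‖x - z‖ ^ 2) := by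
        congr 1; funext z; congr 1; ring
    _ = (4 * π * s) ^ (-(N : ℝ) / 2) * ∫ z : Spc N, rexp (-(1 / (8 * s)) * ‖x - z‖ ^ 2) :=
        integral_const_mul _ _
    _ = (4 * π * s) ^ (-(N : ℝ) / 2) * ∫ z : Spc N, rexp (-(1 / (8 * s)) * ‖z‖ ^ 2) := by
        rw [htr]
    _ = (4 * π * s) ^ (-(N : ℝ) / 2) * (π / (1 / (8 * s))) ^ ((N : ℝ) / 2) := by
        rw [integral_gauss hb]
    _ = 2 ^ ((N : ℝ) / 2) := by
        have h8 : π / (1 / (8 * s)) = 2 * (4 * π * s) := by field_simp; ring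
        rw [h8, Real.mul_rpow (x := (2:ℝ)) (y := 4 * π * s) (z := (N:ℝ)/2)
            (by norm_num) (by positivity)]
        rw [show (4 * π * s) ^ (-(N : ℝ) / 2) * ((2:ℝ) ^ ((N : ℝ) / 2) * (4 * π * s) ^ ((N : ℝ) / 2))
            = (2:ℝ) ^ ((N : ℝ) / 2) * ((4 * π * s) ^ (-(N : ℝ) / 2) * (4 * π * s) ^ ((N : ℝ) / 2))
          from by ring, ← Real.rpow_add (by positivity),
          show (-(N:ℝ)/2 + (N:ℝ)/2) = 0 from by ring, Real.rpow_zero, mul_one]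

end RIS

/-- Lemma 5.5 (ii): if `u` is continuous, nonnegative and bounded on
`ℝ^N × [0,∞)` and `u(x,t) → 0` uniformly on `{|x| ≥ ct}` for every `c > c*`, then the
resolvent `v(·,t) = (I-Δ)⁻¹ u(·,t)` satisfies the same convergence. -/
theorem resolvent_inherits_outer_spreading
    (N : ℕ) (hN : 1 ≤ N) (cstar : ℝ) (hc : 0 < cstar)
    (u : Spc N → ℝ → ℝ)
    (hcont : ContinuousOn (fun q : Spc N × ℝ => u q.1 q.2) {q | 0 ≤ q.2})
    (hnn : ∀ x, ∀ t : ℝ, 0 ≤ t → 0 ≤ u x t)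
    (hbdd : ∃ M, ∀ x, ∀ t : ℝ, 0 ≤ t → u x t ≤ M)
    (hyp : ∀ c : ℝ, cstar < c → ∀ ε : ℝ, 0 < ε →
      ∃ T : ℝ, ∀ t : ℝ, T ≤ t → ∀ x : Spc N, c * t ≤ ‖x‖ → u x t < ε) :
    ∀ c : ℝ, cstar < c → ∀ ε : ℝ, 0 < ε →
      ∃ T : ℝ, ∀ t : ℝ, T ≤ t → ∀ x : Spc N, c * t ≤ ‖x‖ →
        resolv (fun y => u y t) x < ε := by
  intro c hcc ε hε
  obtain ⟨M, hM⟩ := hbdd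
  have hM0 : 0 ≤ M := le_trans (hnn 0 0 le_rfl) (hM 0 0 le_rfl)
  set c' : ℝ := (cstar + c) / 2 with hc'def
  set δ : ℝ := (c - cstar) / 2 with hδdef
  have hδ : 0 < δ := by rw [hδdef]; linarith
  have hc'1 : cstar < c' := by rw [hc'def]; linarith
  have hcd : c - c' = δ := by rw [hc'def, hδdef]; ring
  obtain ⟨T₀, hT₀⟩ := hyp c' hc'1 (ε / 3) (by positivity)
  set J : ℝ := ∫ s in Ioi (0:ℝ), rexp (-(1/2) * s) with hJ
  have hJint : IntegrableOn (fun s : ℝ => rexp (-(1/2) * s)) (Ioi 0) :=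
    exp_neg_integrableOn_Ioi 0 (by norm_num : (0:ℝ) < 1/2)
  have hJ0 : 0 ≤ J := integral_nonneg fun s => Real.exp_nonneg _
  have htendexp : Tendsto (fun t : ℝ => rexp (-(δ * t) / 2)) atTop (nhds 0) := by
    have h2 : Tendsto (fun t : ℝ => (δ / 2) * t) atTop atTop :=
      Tendsto.const_mul_atTop (by positivity) tendsto_id
    have h1 := tendsto_exp_neg_atTop_nhds_zero.comp h2
    refine h1.congr fun t => ?_
    simp only [Function.comp_apply]
    ring_nf
  have htend : Tendsto (fun t : ℝ => M * 2 ^ ((N:ℝ)/2) * J * rexp (-(δ * t) / 2))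
      atTop (nhds 0) := by
    simpa using htendexp.const_mul (M * 2 ^ ((N:ℝ)/2) * J)
  have hev : ∀ᶠ t in atTop, M * 2 ^ ((N:ℝ)/2) * J * rexp (-(δ * t) / 2) < ε / 3 :=
    htend.eventually_lt_const (by positivity)
  obtain ⟨T₁, hT₁⟩ := eventually_atTop.1 hev
  refine ⟨max (max T₀ T₁) 1, fun t ht x hx => ?_⟩
  show (∫ s in Set.Ioi (0 : ℝ), Real.exp (-s) * ∫ z, heatK N (x - z) s * u z t) < ε
  have ht1 : (1:ℝ) ≤ t := le_trans (le_max_right _ _) ht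
  have ht0 : (0:ℝ) ≤ t := by linarith
  have htT₀ : T₀ ≤ t := le_trans (le_trans (le_max_left _ _) (le_max_left _ _)) ht
  have htT₁ : T₁ ≤ t := le_trans (le_trans (le_max_right _ _) (le_max_left _ _)) ht
  set R : ℝ := δ * t with hR
  have hR0 : 0 ≤ R := mul_nonneg hδ.le ht0
  -- inner bound
  have hinner_le : ∀ s : ℝ, 0 < s →
      (∫ z : Spc N, heatK N (x - z) s * u z t)
        ≤ ε / 3 + M * 2 ^ ((N:ℝ)/2) * rexp (-(R^2) / (8*s)) := by
    intro s hs
    have hA : (0:ℝ) ≤ (4*π*s) ^ (-(N:ℝ)/2) := Real.rpow_nonneg (by positivity) _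
    set g : Spc N → ℝ := fun z => heatK N (x - z) s * (ε / 3)
      + (M * rexp (-(R^2) / (8*s)))
        * ((4*π*s) ^ (-(N:ℝ)/2) * rexp (-‖x - z‖^2 / (8*s))) with hgdef
    have hint1 : Integrable (fun z : Spc N => heatK N (x - z) s * (ε / 3)) :=
      (heatK_integrable hs x).mul_const _
    have hint2 : Integrable (fun z : Spc N => (M * rexp (-(R^2) / (8*s)))
        * ((4*π*s) ^ (-(N:ℝ)/2) * rexp (-‖x - z‖^2 / (8*s)))) :=
      (gauss8_integrable hs x).const_mul _
    have hg_int : Integrable g := hint1.add hint2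
    have hfg : ∀ z, heatK N (x - z) s * u z t ≤ g z := by
      intro z
      by_cases hz : c' * t ≤ ‖z‖
      · have hu := hT₀ t htT₀ z hz
        have h1 : heatK N (x - z) s * u z t ≤ heatK N (x - z) s * (ε / 3) :=
          mul_le_mul_of_nonneg_left hu.le (heatK_nonneg hs _)
        have h2 : 0 ≤ (M * rexp (-(R^2) / (8*s)))
            * ((4*π*s) ^ (-(N:ℝ)/2) * rexp (-‖x - z‖^2 / (8*s))) :=
          mul_nonneg (mul_nonneg hM0 (Real.exp_nonneg _))
            (mul_nonneg hA (Real.exp_nonneg _))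
        rw [hgdef]; simp only []; linarith
      · push_neg at hz
        have hdist : R ≤ ‖x - z‖ := by
          have h1 : ‖x‖ - ‖z‖ ≤ ‖x - z‖ := norm_sub_norm_le x z
          have h2 : c * t - c' * t = R := by rw [hR, ← hcd]; ring
          linarith
        have hsplit : rexp (-‖x - z‖^2 / (4*s)) = rexp (-‖x - z‖^2 / (8*s))
            * rexp (-‖x - z‖^2 / (8*s)) := by
          rw [← Real.exp_add]; congr 1; field_simp; ring
        have he1 : rexp (-‖x - z‖^2 / (8*s)) ≤ rexp (-(R^2) / (8*s)) := by
          apply Real.exp_le_exp.2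
          apply (div_le_div_iff_of_pos_right (by positivity : (0:ℝ) < 8*s)).2
          have : R^2 ≤ ‖x - z‖^2 := pow_le_pow_left₀ hR0 hdist 2
          linarith
        have hu : u z t ≤ M := hM z t ht0
        have hkey : heatK N (x - z) s * u z t ≤ (M * rexp (-(R^2) / (8*s)))
            * ((4*π*s) ^ (-(N:ℝ)/2) * rexp (-‖x - z‖^2 / (8*s))) := by
          have h3 : rexp (-‖x - z‖^2 / (8*s)) * u z t
              ≤ rexp (-(R^2) / (8*s)) * M :=
            mul_le_mul he1 hu (hnn z t ht0) (Real.exp_nonneg _)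
          calc heatK N (x - z) s * u z t
              = (rexp (-‖x - z‖^2 / (8*s)) * u z t)
                * ((4*π*s) ^ (-(N:ℝ)/2) * rexp (-‖x - z‖^2 / (8*s))) := by
                rw [heatK, hsplit]; ring
            _ ≤ (rexp (-(R^2) / (8*s)) * M)
                * ((4*π*s) ^ (-(N:ℝ)/2) * rexp (-‖x - z‖^2 / (8*s))) :=
                mul_le_mul_of_nonneg_right h3 (mul_nonneg hA (Real.exp_nonneg _))
            _ = (M * rexp (-(R^2) / (8*s)))
                * ((4*π*s) ^ (-(N:ℝ)/2) * rexp (-‖x - z‖^2 / (8*s))) := by ring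
        have h4 : 0 ≤ heatK N (x - z) s * (ε / 3) :=
          mul_nonneg (heatK_nonneg hs _) (by positivity)
        rw [hgdef]; simp only []; linarith
    have h1 : (∫ z : Spc N, heatK N (x - z) s * u z t) ≤ ∫ z, g z :=
      integral_mono_of_nonneg
        (Filter.Eventually.of_forall fun z =>
          mul_nonneg (heatK_nonneg hs _) (hnn z t ht0))
        hg_int (Filter.Eventually.of_forall hfg)
    have h2 : ∫ z, g z = ε / 3 + M * 2 ^ ((N:ℝ)/2) * rexp (-(R^2) / (8*s)) := by
      rw [hgdef]
      rw [integral_add hint1 hint2, integral_mul_const, integral_const_mul,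
        heatK_integral hs x, gauss8_integral hs x]
      ring
    linarith [h1, h2.le, h2.ge]
  -- outer estimate
  set C : ℝ := M * 2 ^ ((N:ℝ)/2) with hC
  have hC0 : 0 ≤ C := mul_nonneg hM0 (Real.rpow_nonneg (by norm_num) _)
  have hH1int : IntegrableOn (fun s : ℝ => rexp (-s) * (ε/3)) (Ioi 0) := by
    have := exp_neg_integrableOn_Ioi (0:ℝ) one_pos
    simp only [neg_one_mul] at this
    exact this.mul_const _
  have hH2int : IntegrableOn (fun s : ℝ => (C * rexp (-R/2)) * rexp (-(1/2) * s)) (Ioi 0) :=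
    hJint.const_mul _
  have hH_int : IntegrableOn (fun s : ℝ =>
      rexp (-s) * (ε/3) + (C * rexp (-R/2)) * rexp (-(1/2) * s)) (Ioi 0) :=
    hH1int.add hH2int
  have hF_nonneg : 0 ≤ᵐ[volume.restrict (Ioi 0)]
      fun s => rexp (-s) * ∫ z, heatK N (x - z) s * u z t := by
    filter_upwards [ae_restrict_mem measurableSet_Ioi] with s hs
    exact mul_nonneg (Real.exp_nonneg _)
      (integral_nonneg fun z => mul_nonneg (heatK_nonneg hs _) (hnn z t ht0))
  have hFH : (fun s => rexp (-s) * ∫ z, heatK N (x - z) s * u z t)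
      ≤ᵐ[volume.restrict (Ioi 0)]
      fun s => rexp (-s) * (ε/3) + (C * rexp (-R/2)) * rexp (-(1/2) * s) := by
    filter_upwards [ae_restrict_mem measurableSet_Ioi] with s hs
    have hs0 : (0:ℝ) < s := hs
    have h1 := hinner_le s hs
    have h2 : rexp (-s) * (∫ z, heatK N (x - z) s * u z t)
        ≤ rexp (-s) * (ε/3 + C * rexp (-(R^2) / (8*s))) :=
      mul_le_mul_of_nonneg_left h1 (Real.exp_nonneg _)
    have h3 : rexp (-s) * rexp (-(R^2) / (8*s)) ≤ rexp (-R/2) * rexp (-(1/2) * s) := by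
      rw [← Real.exp_add, ← Real.exp_add]
      apply Real.exp_le_exp.2
      have h4 : R/2 - s/2 ≤ R^2 / (8*s) := by
        rw [le_div_iff₀ (by linarith : (0:ℝ) < 8*s)]
        nlinarith [sq_nonneg (R - 2*s)]
      have h4' : -R ^ 2 / (8 * s) = -(R ^ 2 / (8 * s)) := by ring
      linarith
    have h5 : C * (rexp (-s) * rexp (-(R^2) / (8*s)))
        ≤ C * (rexp (-R/2) * rexp (-(1/2) * s)) := mul_le_mul_of_nonneg_left h3 hC0
    calc rexp (-s) * ∫ z, heatK N (x - z) s * u z t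
        ≤ rexp (-s) * (ε/3 + C * rexp (-(R^2) / (8*s))) := h2
      _ = rexp (-s) * (ε/3) + C * (rexp (-s) * rexp (-(R^2) / (8*s))) := by ring
      _ ≤ rexp (-s) * (ε/3) + C * (rexp (-R/2) * rexp (-(1/2) * s)) := by linarith
      _ = rexp (-s) * (ε/3) + (C * rexp (-R/2)) * rexp (-(1/2) * s) := by ring
  have hmono := integral_mono_of_nonneg hF_nonneg hH_int hFH
  have hHval : (∫ s in Ioi (0:ℝ),
      (rexp (-s) * (ε/3) + (C * rexp (-R/2)) * rexp (-(1/2) * s)))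
      = ε/3 + (C * rexp (-R/2)) * J := by
    rw [integral_add hH1int hH2int, integral_mul_const, integral_const_mul,
      integral_exp_neg_Ioi_zero, ← hJ]
    ring
  have hfin : (C * rexp (-R/2)) * J < ε/3 := by
    have h6 := hT₁ t htT₁
    have h7 : (C * rexp (-R/2)) * J = M * 2 ^ ((N:ℝ)/2) * J * rexp (-(δ * t) / 2) := by
      rw [hC, hR]; ring_nf
    rw [h7]; exact h6
  calc (∫ s in Set.Ioi (0:ℝ), Real.exp (-s) * ∫ z, heatK N (x - z) s * u z t)
      ≤ ∫ s in Ioi (0:ℝ), (rexp (-s) * (ε/3) + (C * rexp (-R/2)) * rexp (-(1/2) * s)) :=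
        hmono
    _ = ε/3 + (C * rexp (-R/2)) * J := hHval
    _ < ε := by linarith
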